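/- For every n ≥ 0, the set F_n = {s ∈ P : |s| ≤ n} is a filter of (P, ≥_∞) (if s ∈ F_n and u ≥_∞ s then u ∈ F_n) and a sublattice of (P, ≥_∞): if s, t ∈ F_n then inf_{(P,≥_∞)}(s,t) ∈ F_n and sup_{(P,≥_∞)}(s,t) ∈ F_n. -/

import Mathlib

/-!
Partitions are modelled as functions `s : ℕ → ℕ` (0-based: `s 0` is the first
part `s_1`), nonincreasing and eventually zero.  A paper index `i ≥ 1`
(columns, transitions `→_i`, increments `s^{↓i}`) corresponds to the Lean
index `i - 1`.
-/

/-- `s` is a partition: nonincreasing and eventually zero. -/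
def IsPartition (s : ℕ → ℕ) : Prop :=
  (∀ i, s (i + 1) ≤ s i) ∧ ∃ N, ∀ i, N ≤ i → s i = 0

/-- `j`-th suffix sum (0-based: `suff s 0` is the total sum `|s|`,
`suff s (j-1)` is the paper's `Σ_j`). -/
noncomputable def suff (s : ℕ → ℕ) (j : ℕ) : ℕ := ∑' i, s (j + i)

/-- `s` is a partition of `n`. -/
noncomputable def IsPartOf (n : ℕ) (s : ℕ → ℕ) : Prop := IsPartition s ∧ suff s 0 = n

/-- Prefix sum of the first `j` parts. -/
def psum (s : ℕ → ℕ) (j : ℕ) : ℕ := ∑ i ∈ Finset.range j, s i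

/-- Dominance ordering: `Dom s t` means `s ≥ t`, i.e. every prefix sum of `s`
is at least the corresponding prefix sum of `t`. -/
def Dom (s t : ℕ → ℕ) : Prop := ∀ j, psum t j ≤ psum s j

/-- `s^{↓(i+1)}`: add one grain on the (0-based) `i`-th column. -/
def incr (s : ℕ → ℕ) (i : ℕ) : ℕ → ℕ := Function.update s i (s i + 1)

/-- Move one grain from column `a` to column `b` (0-based). -/
def moveGrain (s : ℕ → ℕ) (a b : ℕ) : ℕ → ℕ :=
  fun j => if j = a then s a - 1 else if j = b then s b + 1 else s j

/-- `s` has a cliff at (0-based) column `i`: `s_i ≥ s_{i+1} + 2`. -/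
def Cliff (s : ℕ → ℕ) (i : ℕ) : Prop := s (i + 1) + 2 ≤ s i

/-- `s` has a slippery step at (0-based) column `i`, the plateau ending at
(0-based) column `m`:  `s_i - 1 = s_{i+1} = ⋯ = s_m = s_{m+1} + 1` (in 0-based
indices), with `m ≥ i + 1`. -/
def SlipAt (s : ℕ → ℕ) (i m : ℕ) : Prop :=
  i + 1 ≤ m ∧ (∀ j, i + 1 ≤ j → j ≤ m → s j + 1 = s i) ∧ s (m + 1) + 2 = s i

/-- The transition `s →_{i+1} t` of the paper (0-based `i`): a fall from a
cliff at `i`, or a slip from a slippery step at `i` (the grain landing just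
after the plateau). -/
def Step (s : ℕ → ℕ) (i : ℕ) (t : ℕ → ℕ) : Prop :=
  (Cliff s i ∧ t = moveGrain s i (i + 1)) ∨
  (∃ m, SlipAt s i m ∧ t = moveGrain s i (m + 1))

/-- The set of configurations directly reachable from `s`. -/
def dirreach (s : ℕ → ℕ) : Set (ℕ → ℕ) := {t | ∃ i, Step s i t}

/-- `s` has a (slippery, if `l ≥ 2`) plateau of length `l` at `1`:
`s_1 = s_2 = ⋯ = s_l = s_{l+1} + 1`. -/
def SlipperyPlateau1 (s : ℕ → ℕ) (l : ℕ) : Prop :=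
  (∀ j, j < l → s j = s 0) ∧ s l + 1 = s 0

/-- `s` has a non-slippery plateau at `1`:
`s_1 = ⋯ = s_l ≥ s_{l+1} + 2` for some `l ≥ 2`. -/
def NonSlipperyPlateau1 (s : ℕ → ℕ) : Prop :=
  ∃ l, 2 ≤ l ∧ (∀ j, j < l → s j = s 0) ∧ s l + 2 ≤ s 0

/-- `s` has a slippery step at `1`. -/
def SlipperyStep1 (s : ℕ → ℕ) : Prop := ∃ m, SlipAt s 0 m

/-- `s` has a non-slippery step at `1`: `s_1 = s_2 + 1` and
`s_2 = ⋯ = s_m ≥ s_{m+1} + 2` for some `m ≥ 2` (here `m` is 0-based, `≥ 1`). -/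
def NonSlipperyStep1 (s : ℕ → ℕ) : Prop :=
  s 0 = s 1 + 1 ∧ ∃ m, 1 ≤ m ∧ (∀ j, 1 ≤ j → j ≤ m → s j = s 1) ∧ s (m + 1) + 2 ≤ s 1

/-- `c` is the infimum of `a` and `b` in the dominance lattice `L_B(n)`. -/
noncomputable def IsInfOn (n : ℕ) (a b c : ℕ → ℕ) : Prop :=
  IsPartOf n c ∧ Dom a c ∧ Dom b c ∧ ∀ d, IsPartOf n d → Dom a d → Dom b d → Dom c d

/-- `c` is the supremum of `a` and `b` in the dominance lattice `L_B(n)`. -/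
noncomputable def IsSupOn (n : ℕ) (a b c : ℕ → ℕ) : Prop :=
  IsPartOf n c ∧ Dom c a ∧ Dom c b ∧ ∀ d, IsPartOf n d → Dom d a → Dom d b → Dom d c

/-- The order `≥_∞` on the set `P` of all partitions: `GeInf s t` means
`s ≥_∞ t`, i.e. every suffix sum of `s` is at most that of `t`. -/
noncomputable def GeInf (s t : ℕ → ℕ) : Prop := ∀ j, suff s j ≤ suff t j

/-- `c` is the infimum of `a` and `b` in `(P, ≥_∞)`. -/
noncomputable def IsInfP (a b c : ℕ → ℕ) : Prop :=
  IsPartition c ∧ GeInf a c ∧ GeInf b c ∧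
    ∀ d, IsPartition d → GeInf a d → GeInf b d → GeInf c d

/-- `c` is the supremum of `a` and `b` in `(P, ≥_∞)`. -/
noncomputable def IsSupP (a b c : ℕ → ℕ) : Prop :=
  IsPartition c ∧ GeInf c a ∧ GeInf c b ∧
    ∀ d, IsPartition d → GeInf d a → GeInf d b → GeInf d c

/-- The map `π`: delete the first part, `(s_1, s_2, …) ↦ (s_2, …)`. -/
def shift (s : ℕ → ℕ) : ℕ → ℕ := fun i => s (i + 1)

lemma suff_eq_sum (s : ℕ → ℕ) (N : ℕ) (h : ∀ i, N ≤ i → s i = 0) (j : ℕ) :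
    suff s j = ∑ i ∈ Finset.range N, s (j + i) := by
  apply tsum_eq_sum
  intro i hi
  exact h _ (by have := Finset.mem_range.not.mp hi; omega)

lemma suff_succ (s : ℕ → ℕ) (hs : IsPartition s) (j : ℕ) :
    suff s j = s j + suff s (j + 1) := by
  obtain ⟨N, hN⟩ := hs.2
  rw [suff_eq_sum s (N + 1) (fun i hi => hN i (by omega)) j,
      suff_eq_sum s N hN (j + 1), Finset.sum_range_succ']
  simp only [Nat.add_zero]
  rw [Nat.add_comm]
  congr 1
  apply Finset.sum_congr rfl
  intro i _
  congr 1
  omega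

lemma suff_zero_of_ge (s : ℕ → ℕ) (N : ℕ) (h : ∀ i, N ≤ i → s i = 0) (j : ℕ)
    (hj : N ≤ j) : suff s j = 0 := by
  rw [suff_eq_sum s N h j]
  exact Finset.sum_eq_zero fun i _ => h _ (by omega)

/-- For every `n`, the set `F_n = {s ∈ P : |s| ≤ n}` is a
filter of `(P, ≥_∞)` and a sublattice: it is upward closed for `≥_∞` and
closed under infima and suprema. -/
theorem stmt17 (n : ℕ) :
    (∀ s u : ℕ → ℕ, IsPartition s → suff s 0 ≤ n → IsPartition u →
      GeInf u s → suff u 0 ≤ n) ∧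
    (∀ s t u : ℕ → ℕ, IsPartition s → IsPartition t → suff s 0 ≤ n →
      suff t 0 ≤ n → IsInfP s t u → suff u 0 ≤ n) ∧
    (∀ s t u : ℕ → ℕ, IsPartition s → IsPartition t → suff s 0 ≤ n →
      suff t 0 ≤ n → IsSupP s t u → suff u 0 ≤ n) := by
  refine ⟨fun s u _ hsn _ hus => le_trans (hus 0) hsn, ?_,
    fun s t u _ _ hsn _ hu => le_trans (hu.2.1 0) hsn⟩
  intro s t u hs ht hsn htn hu
  obtain ⟨Ns, hNs⟩ := hs.2
  obtain ⟨Nt, hNt⟩ := ht.2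
  set N := max Ns Nt with hN
  set M : ℕ → ℕ := fun j => max (suff s j) (suff t j) with hM
  have hMs : ∀ j, suff s j = s j + suff s (j + 1) := suff_succ s hs
  have hMt : ∀ j, suff t j = t j + suff t (j + 1) := suff_succ t ht
  have hMmono : ∀ j, M (j + 1) ≤ M j := by
    intro j
    have h1 := hMs j; have h2 := hMt j
    simp only [hM]
    omega
  have hMle : Antitone M := antitone_nat_of_succ_le hMmono
  have hMconv : ∀ j, 2 * M (j + 1) ≤ M j + M (j + 2) := by
    intro j
    have h1 := hMs j; have h2 := hMt j
    have h3 := hMs (j + 1); have h4 := hMt (j + 1)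
    rw [show j + 1 + 1 = j + 2 from rfl] at h3 h4
    have h5 := hs.1 j; have h6 := ht.1 j
    simp only [hM]
    omega
  have hMzero : ∀ j, N ≤ j → M j = 0 := by
    intro j hj
    simp only [hM]
    rw [suff_zero_of_ge s Ns hNs j (by omega), suff_zero_of_ge t Nt hNt j (by omega)]
    simp
  set d : ℕ → ℕ := fun i => M i - M (i + 1) with hd
  have hdpart : IsPartition d := by
    constructor
    · intro i
      have h1 := hMconv i
      have h2 := hMmono i
      have h3 := hMmono (i + 1)
      rw [show i + 1 + 1 = i + 2 from rfl] at h3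
      simp only [hd]
      rw [show i + 1 + 1 = i + 2 from rfl]
      omega
    · exact ⟨N, fun i hi => by
        simp only [hd]
        rw [hMzero i hi, hMzero (i + 1) (by omega)]⟩
  have hdsuff : ∀ j, suff d j = M j := by
    intro j
    rw [suff_eq_sum d N (fun i hi => by
      simp only [hd]; rw [hMzero i hi, hMzero (i + 1) (by omega)]) j]
    have key : ∀ K, ∑ i ∈ Finset.range K, d (j + i) = M j - M (j + K) := by
      intro K
      induction K with
      | zero => simp
      | succ K ih =>
        rw [Finset.sum_range_succ, ih]
        have h1 := hMmono (j + K)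
        have h2 : M (j + K) ≤ M j := hMle (Nat.le_add_right j K)
        simp only [hd]
        rw [show j + (K + 1) = j + K + 1 from rfl]
        omega
    rw [key N, hMzero (j + N) (by omega)]
    omega
  have hsd : GeInf s d := fun j => by rw [hdsuff j]; exact le_max_left _ _
  have htd : GeInf t d := fun j => by rw [hdsuff j]; exact le_max_right _ _
  have hfin := hu.2.2.2 d hdpart hsd htd 0
  rw [hdsuff 0] at hfin
  simp only [hM] at hfin
  omega
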